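/- Let g be holomorphic on a neighbourhood of the closed arc {e^{it} : a ≤ t ≤ b}, injective there, with g(e^{iθ}) = e^{iw(θ)} for a real-valued continuously differentiable function w on [a,b] satisfying w'(θ) ∈ [c,k] for constants 0 < c < k < ∞. Then there exists δ < 1 such that for all r ∈ [δ,1) and all θ ∈ [a,b], |Arg(1 − g(re^{iθ})/g(e^{iθ}))| < π/4; i.e., g(re^{iθ}) lies in the Stolz angle at g(e^{iθ}) of opening π/2. -/

import Mathlib

open Set Filter Complex
open scoped Real

theorem abs_arg_lt_quarter (z : ℂ) (h : |z.im| < z.re) : |Complex.arg z| < π/4 := by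
  have hre : 0 < z.re := lt_of_le_of_lt (abs_nonneg _) h
  have h2 : |Complex.arg z| < π/2 := Complex.abs_arg_lt_pi_div_two_iff.2 (Or.inl hre)
  by_contra hc
  push_neg at hc
  have hpi : (0:ℝ) < π := Real.pi_pos
  have htan : Real.tan (π/4) ≤ Real.tan |Complex.arg z| := by
    rcases eq_or_lt_of_le hc with h' | h'
    · rw [← h']
    · exact le_of_lt (Real.tan_lt_tan_of_nonneg_of_lt_pi_div_two (by linarith) h2 h')
  rw [Real.tan_pi_div_four] at htan
  have ht : Real.tan |Complex.arg z| = |Real.tan (Complex.arg z)| := by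
    rcases le_or_gt 0 (Complex.arg z) with h' | h'
    · rw [_root_.abs_of_nonneg h', _root_.abs_of_nonneg
        (Real.tan_nonneg_of_nonneg_of_le_pi_div_two h'
          (by rw [_root_.abs_of_nonneg h'] at h2; linarith))]
    · have habs : |Complex.arg z| = -Complex.arg z := abs_of_neg h'
      have h2' : -(π/2) < Complex.arg z := by rw [habs] at h2; linarith
      have hnp : Real.tan (Complex.arg z) ≤ 0 := by
        have := Real.tan_nonneg_of_nonneg_of_le_pi_div_two (neg_nonneg.2 h'.le) (by linarith)
        rw [Real.tan_neg] at this
        linarith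
      rw [habs, Real.tan_neg, abs_of_nonpos hnp]
  rw [ht, Complex.tan_arg, abs_div, _root_.abs_of_pos hre] at htan
  have := (one_le_div hre).mp htan
  linarith

theorem deriv_identity
    (a b : ℝ) (hab : a < b)
    (g : ℂ → ℂ) (U : Set ℂ) (hU : IsOpen U)
    (w w' : ℝ → ℝ)
    (hw : ∀ θ ∈ Icc a b, g (Complex.exp ((θ : ℝ) * Complex.I)) = Complex.exp ((w θ : ℂ) * Complex.I))
    (hw' : ∀ θ ∈ Icc a b, HasDerivAt w (w' θ) θ)
    (hg : DifferentiableOn ℂ g U)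
    (θ : ℝ) (hθ : θ ∈ Icc a b) (hmem : Complex.exp ((θ:ℂ) * Complex.I) ∈ U) :
    deriv g (Complex.exp ((θ:ℂ) * Complex.I)) * Complex.exp ((θ:ℂ) * Complex.I)
      = (w' θ : ℂ) * g (Complex.exp ((θ:ℂ) * Complex.I)) := by
  set E : ℝ → ℂ := fun t => Complex.exp ((t:ℂ) * Complex.I) with hE
  have hEd : ∀ t : ℝ, HasDerivAt E (Complex.exp ((t:ℂ) * Complex.I) * Complex.I) t := by
    intro t
    have h1 : HasDerivAt (fun t : ℝ => (t:ℂ) * Complex.I) Complex.I t := by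
      simpa using ((hasDerivAt_id t).ofReal_comp.mul_const Complex.I)
    simpa using h1.cexp
  have hgd : DifferentiableAt ℂ g (E θ) := hg.differentiableAt (hU.mem_nhds hmem)
  have h₁ : HasDerivAt (fun t => g (E t))
      (deriv g (E θ) * (Complex.exp ((θ:ℂ) * Complex.I) * Complex.I)) θ :=
    (hgd.hasDerivAt).comp θ (hEd θ)
  have h₂ : HasDerivAt (fun t => Complex.exp ((w t : ℂ) * Complex.I))
      (Complex.exp ((w θ : ℂ) * Complex.I) * ((w' θ : ℂ) * Complex.I)) θ := by
    have h1 : HasDerivAt (fun t : ℝ => ((w t : ℂ) * Complex.I)) ((w' θ : ℂ) * Complex.I) θ :=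
      ((hw' θ hθ).ofReal_comp.mul_const Complex.I)
    simpa using h1.cexp
  have hud : UniqueDiffWithinAt ℝ (Icc a b) θ := (uniqueDiffOn_Icc hab) θ hθ
  have h₁' := (h₁.hasDerivWithinAt (s := Icc a b)).derivWithin hud
  have h₂' : HasDerivWithinAt (fun t => g (E t))
      (Complex.exp ((w θ : ℂ) * Complex.I) * ((w' θ : ℂ) * Complex.I)) (Icc a b) θ :=
    (h₂.hasDerivWithinAt (s := Icc a b)).congr (fun y hy => (hw y hy)) (hw θ hθ)
  have h₂'' := h₂'.derivWithin hud
  have key : deriv g (E θ) * (Complex.exp ((θ:ℂ) * Complex.I) * Complex.I)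
      = Complex.exp ((w θ : ℂ) * Complex.I) * ((w' θ : ℂ) * Complex.I) := by
    rw [← h₁', ← h₂'']
  have hwθ := hw θ hθ
  have hI : (Complex.I : ℂ) ≠ 0 := Complex.I_ne_zero
  rw [hwθ]
  have key' : (deriv g (E θ) * Complex.exp ((θ:ℂ)*Complex.I)) * Complex.I
      = ((w' θ : ℂ) * Complex.exp ((w θ:ℂ)*Complex.I)) * Complex.I := by linear_combination key
  exact mul_right_cancel₀ hI key'


/-- if `g` is holomorphic and injective on a neighbourhood of the closed
arc `{e^{it} : a ≤ t ≤ b}`, with `g(e^{iθ}) = e^{i w(θ)}` for a `C¹` real function `w`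
with `w' ∈ [c,k]`, `0 < c < k`, then there is `δ < 1` so that for all `r ∈ [δ,1)` and
`θ ∈ [a,b]`, `|Arg(1 − g(re^{iθ})/g(e^{iθ}))| < π/4`, i.e. `g(re^{iθ})` lies in the
Stolz angle of opening `π/2` at `g(e^{iθ})`. -/
theorem stolz_angle_claim
    (a b : ℝ) (hab : a < b)
    (g : ℂ → ℂ) (U : Set ℂ) (hU : IsOpen U)
    (hKU : {z : ℂ | ∃ t ∈ Icc a b, z = Complex.exp ((t : ℂ) * Complex.I)} ⊆ U)
    (hg : DifferentiableOn ℂ g U) (hginj : InjOn g U)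
    (w w' : ℝ → ℝ) (c k : ℝ) (hck : 0 < c) (hck' : c < k)
    (hw : ∀ θ ∈ Icc a b, g (Complex.exp ((θ : ℝ) * Complex.I)) = Complex.exp ((w θ : ℂ) * Complex.I))
    (hw' : ∀ θ ∈ Icc a b, HasDerivAt w (w' θ) θ)
    (hw'cont : ContinuousOn w' (Icc a b))
    (hw'mem : ∀ θ ∈ Icc a b, w' θ ∈ Icc c k) :
    ∃ δ : ℝ, δ < 1 ∧ 0 ≤ δ ∧ ∀ r ∈ Ico δ 1, ∀ θ ∈ Icc a b,
      |Complex.arg (1 - g ((r : ℂ) * Complex.exp ((θ : ℂ) * Complex.I)) /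
          g (Complex.exp ((θ : ℂ) * Complex.I)))| < π / 4 := by
  have hcexp : Continuous (fun t : ℝ => Complex.exp ((t:ℂ) * Complex.I)) :=
    Complex.continuous_exp.comp (Complex.continuous_ofReal.mul continuous_const)
  -- the arc as an image
  have hKim : {z : ℂ | ∃ t ∈ Icc a b, z = Complex.exp ((t : ℂ) * Complex.I)}
      = (fun t : ℝ => Complex.exp ((t:ℂ) * Complex.I)) '' Icc a b := by
    ext z; simp [eq_comm]
  have hKc : IsCompact ((fun t : ℝ => Complex.exp ((t:ℂ) * Complex.I)) '' Icc a b) :=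
    (isCompact_Icc).image hcexp
  have hKU' : (fun t : ℝ => Complex.exp ((t:ℂ) * Complex.I)) '' Icc a b ⊆ U := by
    rw [← hKim]; exact hKU
  obtain ⟨ε, hε, hthick⟩ := hKc.exists_thickening_subset_open hU hKU'
  set η : ℝ := min (ε/2) (1/2) with hηdef
  have hη : 0 < η := lt_min (by linarith) (by norm_num)
  have hη1 : η ≤ 1/2 := min_le_right _ _
  -- all points t e^{iθ} with t ∈ [1-η,1] lie in U
  have hsub : ∀ t ∈ Icc (1-η) 1, ∀ θ ∈ Icc a b, ((t:ℂ) * Complex.exp ((θ:ℂ) * Complex.I)) ∈ U := by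
    intro t ht θ hθ
    apply hthick
    rw [Metric.mem_thickening_iff]
    refine ⟨Complex.exp ((θ:ℂ) * Complex.I), ⟨θ, hθ, rfl⟩, ?_⟩
    have : ((t:ℂ) * Complex.exp ((θ:ℂ) * Complex.I)) - Complex.exp ((θ:ℂ) * Complex.I)
        = ((t - 1 : ℝ) : ℂ) * Complex.exp ((θ:ℂ) * Complex.I) := by push_cast; ring
    rw [Complex.dist_eq, this, norm_mul, Complex.norm_real, Real.norm_eq_abs, Complex.norm_exp_ofReal_mul_I, mul_one]
    have : |t - 1| ≤ η := by rw [abs_le]; constructor <;> [linarith [ht.1]; linarith [ht.2]]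
    calc |t - 1| ≤ η := this
    _ ≤ ε/2 := min_le_left _ _
    _ < ε := by linarith
  -- continuity of deriv g on U
  have hderiv : ContinuousOn (deriv g) U :=
    ((hg.analyticOnNhd hU).deriv).continuousOn
  -- the comparison function
  set F : ℝ × ℝ → ℂ := fun p =>
    deriv g ((p.1:ℂ) * Complex.exp ((p.2:ℂ) * Complex.I)) * Complex.exp ((p.2:ℂ) * Complex.I)
      / g (Complex.exp ((p.2:ℂ) * Complex.I)) with hFdef
  set S : Set (ℝ × ℝ) := Icc (1-η) 1 ×ˢ Icc a b with hSdef
  have hScompact : IsCompact S := (isCompact_Icc).prod isCompact_Icc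
  have hgE : ∀ θ ∈ Icc a b, g (Complex.exp ((θ:ℂ) * Complex.I)) ≠ 0 := by
    intro θ hθ
    rw [hw θ hθ]
    exact Complex.exp_ne_zero _
  have hcexp2 : Continuous (fun p : ℝ × ℝ => Complex.exp ((p.2:ℂ) * Complex.I)) :=
    hcexp.comp continuous_snd
  have hcontinner : Continuous (fun p : ℝ × ℝ => (p.1:ℂ) * Complex.exp ((p.2:ℂ) * Complex.I)) :=
    (Complex.continuous_ofReal.comp continuous_fst).mul hcexp2
  have hFcont : ContinuousOn F S := by
    apply ContinuousOn.div
    · apply ContinuousOn.mul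
      · exact hderiv.comp hcontinner.continuousOn
          (fun p hp => hsub p.1 hp.1 p.2 hp.2)
      · exact hcexp2.continuousOn
    · refine (hg.continuousOn.comp hcexp2.continuousOn ?_)
      intro p hp
      exact hKU ⟨p.2, hp.2, rfl⟩
    · intro p hp
      exact hgE p.2 hp.2
  have hunif := hScompact.uniformContinuousOn_of_continuous hFcont
  obtain ⟨d, hd, hdist⟩ := Metric.uniformContinuousOn_iff.mp hunif (c/4) (by linarith)
  -- the choice of δ
  refine ⟨max (1 - min η (d/2)) 0, ?_, le_max_right _ _, ?_⟩
  · apply max_lt _ one_pos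
    have : 0 < min η (d/2) := lt_min hη (by linarith)
    linarith
  intro r hr θ hθ
  set E : ℂ := Complex.exp ((θ:ℂ) * Complex.I) with hEdef
  have hrIco := hr
  have hr1 : r < 1 := hr.2
  have hrlb : 1 - min η (d/2) ≤ r := le_trans (le_max_left _ _) hr.1
  have hminη : min η (d/2) ≤ η := min_le_left _ _
  have hmind : min η (d/2) ≤ d/2 := min_le_right _ _
  have hrIcc : ∀ t ∈ Icc r 1, t ∈ Icc (1-η) 1 := by
    intro t ht
    exact ⟨by linarith [ht.1], ht.2⟩
  have hgEne : g E ≠ 0 := hgE θ hθ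
  -- FTC
  have hderivAt : ∀ t ∈ uIcc r 1, HasDerivAt (fun t : ℝ => g ((t:ℂ) * E))
      (deriv g ((t:ℂ) * E) * E) t := by
    intro t ht
    rw [uIcc_of_le hr1.le] at ht
    have hlin : HasDerivAt (fun t : ℝ => (t:ℂ) * E) E t := by
      simpa using ((hasDerivAt_id t).ofReal_comp.mul_const E)
    have hmemU : ((t:ℂ) * E) ∈ U := hsub t (hrIcc t ht) θ hθ
    exact ((hg.differentiableAt (hU.mem_nhds hmemU)).hasDerivAt).comp t hlin
  have hmapsto : ∀ t ∈ Icc r 1, ((t:ℂ) * E) ∈ U := fun t ht => hsub t (hrIcc t ht) θ hθ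
  have hcontint : ContinuousOn (fun t : ℝ => deriv g ((t:ℂ) * E) * E) (Icc r 1) := by
    apply ContinuousOn.mul _ continuousOn_const
    exact hderiv.comp ((Complex.continuous_ofReal.mul continuous_const).continuousOn) hmapsto
  have hintble : IntervalIntegrable (fun t : ℝ => deriv g ((t:ℂ) * E) * E)
      MeasureTheory.volume r 1 := by
    apply ContinuousOn.intervalIntegrable
    rwa [uIcc_of_le hr1.le]
  have hftc : ∫ t in r..(1:ℝ), deriv g ((t:ℂ) * E) * E = g ((1:ℂ) * E) - g ((r:ℂ) * E) := by
    have := intervalIntegral.integral_eq_sub_of_hasDerivAt hderivAt hintble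
    simpa using this
  -- φ t = F (t, θ)
  set φ : ℝ → ℂ := fun t => deriv g ((t:ℂ) * E) * E / g E with hφdef
  have hφint : IntervalIntegrable φ MeasureTheory.volume r 1 := hintble.div_const _
  have hident : 1 - g ((r:ℂ) * E) / g E = ∫ t in r..(1:ℝ), φ t := by
    rw [hφdef]
    simp only []
    rw [intervalIntegral.integral_div, hftc]
    field_simp
  -- bounds on φ
  have hφbound : ∀ t ∈ Icc r 1, ‖φ t - (w' θ : ℂ)‖ < c/4 := by
    intro t ht
    have hFt : φ t = F (t, θ) := rfl
    have hF1 : F (1, θ) = (w' θ : ℂ) := by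
      have hmemE : E ∈ U := hKU ⟨θ, hθ, rfl⟩
      have := deriv_identity a b hab g U hU w w' hw hw' hg θ hθ hmemE
      rw [hFdef]
      simp only [Complex.ofReal_one, one_mul]
      rw [← hEdef] at this ⊢
      rw [this]
      field_simp
    have hmem1 : ((t:ℝ), θ) ∈ S := ⟨hrIcc t ht, hθ⟩
    have hmem2 : ((1:ℝ), θ) ∈ S :=
      Set.mk_mem_prod ⟨by linarith, le_refl 1⟩ hθ
    have hdd : dist ((t:ℝ), θ) ((1:ℝ), θ) < d := by
      rw [Prod.dist_eq]
      simp only [dist_self]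
      rw [max_eq_left dist_nonneg]
      rw [Real.dist_eq]
      have h1 : |t - 1| = 1 - t := by rw [abs_of_nonpos (by linarith [ht.2])]; ring
      rw [h1]
      have : 1 - t ≤ 1 - r := by linarith [ht.1]
      linarith
    have := hdist _ hmem1 _ hmem2 hdd
    rw [Complex.dist_eq] at this
    rw [hFt, ← hF1]
    exact this
  have hφre : ∀ t ∈ Icc r 1, 3*c/4 ≤ (φ t).re := by
    intro t ht
    have h1 := hφbound t ht
    have h2 : |(φ t - (w' θ : ℂ)).re| ≤ ‖φ t - (w' θ : ℂ)‖ := Complex.abs_re_le_norm _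
    simp only [Complex.sub_re, Complex.ofReal_re] at h2
    have h3 := (hw'mem θ hθ).1
    have := abs_le.mp (le_of_lt (lt_of_le_of_lt h2 h1))
    linarith [this.1]
  have hφim : ∀ t ∈ Icc r 1, |(φ t).im| ≤ c/4 := by
    intro t ht
    have h1 := hφbound t ht
    have h2 : |(φ t - (w' θ : ℂ)).im| ≤ ‖φ t - (w' θ : ℂ)‖ := Complex.abs_im_le_norm _
    simp only [Complex.sub_im, Complex.ofReal_im, sub_zero] at h2
    linarith
  -- integrate the bounds
  set z : ℂ := 1 - g ((r:ℂ) * E) / g E with hzdef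
  have hzre : z.re = ∫ t in r..(1:ℝ), (φ t).re := by
    rw [hident]
    simpa using (Complex.reCLM.intervalIntegral_comp_comm hφint).symm
  have hzim : z.im = ∫ t in r..(1:ℝ), (φ t).im := by
    rw [hident]
    simpa using (Complex.imCLM.intervalIntegral_comp_comm hφint).symm
  have hφreint : IntervalIntegrable (fun t => (φ t).re) MeasureTheory.volume r 1 :=
    (Complex.continuous_re.comp_continuousOn
      ((hcontint.div_const _))).intervalIntegrable_of_Icc hr1.le
  have hφimint : IntervalIntegrable (fun t => (φ t).im) MeasureTheory.volume r 1 :=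
    (Complex.continuous_im.comp_continuousOn
      ((hcontint.div_const _))).intervalIntegrable_of_Icc hr1.le
  have hrebound : 3*c/4 * (1 - r) ≤ z.re := by
    rw [hzre]
    have h1 : ∫ _t in r..(1:ℝ), (3*c/4 : ℝ) = (1 - r) * (3*c/4) := by
      rw [intervalIntegral.integral_const]; simp [smul_eq_mul]
    calc 3*c/4 * (1 - r) = ∫ _t in r..(1:ℝ), (3*c/4 : ℝ) := by rw [h1]; ring
    _ ≤ ∫ t in r..(1:ℝ), (φ t).re := by
        apply intervalIntegral.integral_mono_on hr1.le (intervalIntegrable_const) hφreint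
        intro t ht
        exact hφre t ht
  have himbound : |z.im| ≤ c/4 * (1 - r) := by
    rw [hzim]
    have := intervalIntegral.norm_integral_le_of_norm_le_const (C := c/4)
      (f := fun t => (φ t).im) (a := r) (b := 1) ?_
    · rw [Real.norm_eq_abs] at this
      calc |∫ t in r..(1:ℝ), (φ t).im| ≤ c/4 * |1 - r| := this
      _ = c/4 * (1 - r) := by rw [_root_.abs_of_nonneg (by linarith : (0:ℝ) ≤ 1 - r)]
    · intro t ht
      rw [uIoc_of_le hr1.le] at ht
      rw [Real.norm_eq_abs]
      exact hφim t ⟨ht.1.le, ht.2⟩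
  -- conclude
  apply abs_arg_lt_quarter
  have h1r : 0 < 1 - r := by linarith
  calc |z.im| ≤ c/4 * (1 - r) := himbound
  _ < 3*c/4 * (1 - r) := by nlinarith
  _ ≤ z.re := hrebound
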